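/- For any irreducible pair p on A, the cycle distance from p to the set of standard pairs is at most #A − 2; that is, p can be connected to a standard pair by a Rauzy path consisting of at most #A − 2 maximal monotone cycles (maximal runs of consecutive moves of a single type). -/

import Mathlib

/-- A "pair" on a finite alphabet `A`: two bijections (rows) from `A`
to positions `Fin (card A)` (position `i` represents the value `i+1`). -/
structure RPair (A : Type*) [Fintype A] where
  p : Fin 2 → A ≃ Fin (Fintype.card A)

variable {A : Type*} [Fintype A]

/-- The Rauzy move of type `ε`, as a relation: `Q = ε • P`. Row `ε` is fixed;
in row `1-ε` the last entry is cycled to just after the letter `z` occupying the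
last position of row `ε` (0-indexed positions). -/
def Rmove (ε : Fin 2) (P Q : RPair A) : Prop :=
  Q.p ε = P.p ε ∧
  ∀ z : A, ((P.p ε) z).val = Fintype.card A - 1 →
    ∀ b : A, ((Q.p (1 - ε)) b).val =
      if ((P.p (1 - ε)) b).val ≤ ((P.p (1 - ε)) z).val then ((P.p (1 - ε)) b).val
      else if ((P.p (1 - ε)) b).val < Fintype.card A - 1 then ((P.p (1 - ε)) b).val + 1
      else ((P.p (1 - ε)) z).val + 1

/-- A pair is irreducible if its two rows never occupy the first `k` positions
with the same set of letters, for `0 < k < card A`. -/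
def IrreduciblePair (P : RPair A) : Prop :=
  ∀ k : ℕ, 0 < k → k < Fintype.card A →
    {a : A | ((P.p 0) a).val < k} ≠ {a : A | ((P.p 1) a).val < k}

/-- A pair is standard if the first letter of each row is the last letter of the other. -/
def StandardPair (P : RPair A) : Prop :=
  (∀ a : A, ((P.p 0) a).val = 0 → ((P.p 1) a).val = Fintype.card A - 1) ∧
  (∀ z : A, ((P.p 1) z).val = 0 → ((P.p 0) z).val = Fintype.card A - 1)

/-- `Q` is reachable from `P` by finitely many Rauzy moves. -/
def InRauzyClass (P Q : RPair A) : Prop :=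
  Relation.ReflTransGen (fun X Y : RPair A => ∃ ε, Rmove ε X Y) P Q

/-- `k`-fold iteration of the type-`ε` Rauzy move, as a relation. -/
def RmoveIter {A : Type*} [Fintype A] (ε : Fin 2) : ℕ → RPair A → RPair A → Prop
  | 0 => fun P Q => Q = P
  | (k + 1) => fun P Q => ∃ R, Rmove ε P R ∧ RmoveIter ε k R Q

/-- `CyclesPath m P Q`: `Q` is reachable from `P` by a Rauzy path consisting of
`m` (monotone) cycles, each a positive number of moves of a single type. -/
def CyclesPath {A : Type*} [Fintype A] : ℕ → RPair A → RPair A → Prop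
  | 0 => fun P Q => Q = P
  | (m + 1) => fun P Q => ∃ (ε : Fin 2) (k : ℕ) (R : RPair A),
      0 < k ∧ RmoveIter ε k P R ∧ CyclesPath m R Q


namespace RotTest
variable {N : ℕ}

def rotFun (t k : ℕ) (x : Fin N) : Fin N :=
  if h : x.val ≤ t then x
  else ⟨t + 1 + ((x.val - t - 1 + k) % (N - 1 - t)), by
    have hx := x.isLt
    have hL : 0 < N - 1 - t := by omega
    have := Nat.mod_lt (x.val - t - 1 + k) hL
    omega⟩

lemma rotFun_inj (t k : ℕ) : Function.Injective (rotFun (N := N) t k) := by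
  intro x y hxy
  have hv := congrArg Fin.val hxy
  unfold rotFun at hv
  by_cases hx : x.val ≤ t <;> by_cases hy : y.val ≤ t <;> simp [hx, hy] at hv
  · exact Fin.ext hv
  · omega
  · omega
  · have h1 : (x.val - t - 1 + k) % (N - 1 - t) = (y.val - t - 1 + k) % (N - 1 - t) := by omega
    have hxL : x.val - t - 1 < N - 1 - t := by have := x.isLt; omega
    have hyL : y.val - t - 1 < N - 1 - t := by have := y.isLt; omega
    have h2 : (x.val - t - 1) % (N-1-t) = (y.val - t - 1) % (N-1-t) :=
      Nat.ModEq.add_right_cancel' k h1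
    rw [Nat.mod_eq_of_lt hxL, Nat.mod_eq_of_lt hyL] at h2
    exact Fin.ext (by omega)

noncomputable def rot (t k : ℕ) : Fin N ≃ Fin N :=
  Equiv.ofBijective _ ((Finite.injective_iff_bijective).mp (rotFun_inj t k))

lemma rot_apply (t k : ℕ) (x : Fin N) : rot t k x = rotFun t k x := rfl

lemma rot_apply_le {t : ℕ} (k : ℕ) {x : Fin N} (h : x.val ≤ t) : rot t k x = x := by
  simp [rot_apply, rotFun, h]

lemma rot_val_gt {t : ℕ} (k : ℕ) {x : Fin N} (h : t < x.val) :
    (rot t k x).val = t + 1 + ((x.val - t - 1 + k) % (N - 1 - t)) := by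
  rw [rot_apply]
  unfold rotFun
  rw [dif_neg (by omega)]

lemma rot_symm_le {t : ℕ} (k : ℕ) {x : Fin N} (h : x.val ≤ t) : (rot t k).symm x = x := by
  conv_lhs => rw [← rot_apply_le k h]
  exact Equiv.symm_apply_apply _ _

lemma rot_zero (t : ℕ) : (rot t 0 : Fin N ≃ Fin N) = Equiv.refl _ := by
  apply Equiv.ext; intro x
  by_cases h : x.val ≤ t
  · simp [rot_apply_le 0 h]
  · push_neg at h
    apply Fin.ext
    rw [rot_val_gt 0 h]
    have hx := x.isLt
    rw [Nat.add_zero, Nat.mod_eq_of_lt (by omega)]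
    simp; omega

lemma rot_succ (t k : ℕ) (x : Fin N) : rot t 1 (rot t k x) = rot t (k+1) x := by
  by_cases h : x.val ≤ t
  · rw [rot_apply_le k h, rot_apply_le 1 h, rot_apply_le (k+1) h]
  · push_neg at h
    have h1 : t < (rot t k x).val := by rw [rot_val_gt k h]; omega
    apply Fin.ext
    rw [rot_val_gt 1 h1, rot_val_gt k h, rot_val_gt (k+1) h]
    have e1 : t + 1 + (x.val - t - 1 + k) % (N - 1 - t) - t - 1
        = (x.val - t - 1 + k) % (N-1-t) := by omega
    rw [e1, Nat.mod_add_mod]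
    have e2 : x.val - t - 1 + k + 1 = x.val - t - 1 + (k + 1) := by omega
    rw [e2]

lemma rot_send {t : ℕ} {q : Fin N} (h1 : t < q.val) (h2 : q.val ≤ N - 2) :
    (rot t (N - 1 - q.val) q).val = N - 1 := by
  rw [rot_val_gt _ h1]
  have hq := q.isLt
  have e : q.val - t - 1 + (N - 1 - q.val) = N - 1 - t - 1 := by omega
  rw [e, Nat.mod_eq_of_lt (by omega)]
  omega

lemma rot_one_val {t : ℕ} (x : Fin N) :
    (rot t 1 x).val = if x.val ≤ t then x.val
      else if x.val < N - 1 then x.val + 1 else t + 1 := by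
  by_cases h : x.val ≤ t
  · simp [rot_apply_le 1 h, h]
  · push_neg at h
    rw [rot_val_gt 1 h]
    have hx := x.isLt
    rw [if_neg (by omega)]
    by_cases h2 : x.val < N - 1
    · have hlt : x.val - t - 1 + 1 < N - 1 - t := by omega
      rw [Nat.mod_eq_of_lt hlt, if_pos h2]
      omega
    · have e : x.val - t - 1 + 1 = N - 1 - t := by omega
      rw [e, Nat.mod_self, if_neg h2]

lemma rot_symm_last {t : ℕ} {q : Fin N} (h1 : t < q.val) (h2 : q.val ≤ N - 2) :
    (rot t (N - 1 - q.val)).symm ⟨N - 1, by omega⟩ = q := by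
  have := rot_send h1 h2
  have he : rot t (N - 1 - q.val) q = ⟨N-1, by have := q.isLt; omega⟩ := Fin.ext this
  rw [← he, Equiv.symm_apply_apply]

end RotTest
-- (appended after the given definitions)
namespace RauzyProof
open RotTest
variable {A : Type*} [Fintype A]

local notation "n" => Fintype.card A

lemma RPair.ext' {P Q : RPair A} (h : P.p = Q.p) : P = Q := by
  cases P; cases Q; simpa using h

/-- swap the two rows -/
def swapP (P : RPair A) : RPair A := ⟨![P.p 1, P.p 0]⟩

@[simp] lemma swapP_p0 (P : RPair A) : (swapP P).p 0 = P.p 1 := rfl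
@[simp] lemma swapP_p1 (P : RPair A) : (swapP P).p 1 = P.p 0 := rfl

lemma fin2_cases (δ : Fin 2) : δ = 0 ∨ δ = 1 := by omega

@[simp] lemma swapP_apply (P : RPair A) (δ : Fin 2) : (swapP P).p δ = P.p (1 - δ) := by
  rcases fin2_cases δ with h | h <;> subst h <;> simp

@[simp] lemma swapP_swapP (P : RPair A) : swapP (swapP P) = P := by
  apply RPair.ext'
  funext δ
  rcases fin2_cases δ with h | h <;> subst h <;> simp

@[simp] lemma one_sub_one_sub (ε : Fin 2) : 1 - (1 - ε) = ε := by omega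

lemma Rmove_swap {ε : Fin 2} {P Q : RPair A} (h : Rmove ε P Q) :
    Rmove (1 - ε) (swapP P) (swapP Q) := by
  obtain ⟨h1, h2⟩ := h
  constructor
  · simpa using h1
  · simpa using h2

lemma RmoveIter_swap {ε : Fin 2} {k : ℕ} {P Q : RPair A} (h : RmoveIter ε k P Q) :
    RmoveIter (1 - ε) k (swapP P) (swapP Q) := by
  induction k generalizing P with
  | zero => simp only [RmoveIter] at h ⊢; rw [h]
  | succ k ih =>
    obtain ⟨R, hm, hrest⟩ := h
    exact ⟨swapP R, Rmove_swap hm, ih hrest⟩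

lemma CyclesPath_swap {m : ℕ} {P Q : RPair A} (h : CyclesPath m P Q) :
    CyclesPath m (swapP P) (swapP Q) := by
  induction m generalizing P with
  | zero => simp only [CyclesPath] at h ⊢; rw [h]
  | succ m ih =>
    obtain ⟨ε, k, R, hk, hit, hrest⟩ := h
    exact ⟨1 - ε, k, swapP R, hk, RmoveIter_swap hit, ih hrest⟩

lemma IrreduciblePair_swap {P : RPair A} (h : IrreduciblePair P) :
    IrreduciblePair (swapP P) := by
  intro k hk1 hk2 heq
  exact h k hk1 hk2 (by simpa using heq.symm)

lemma StandardPair_swap {P : RPair A} (h : StandardPair P) : StandardPair (swapP P) := by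
  obtain ⟨h1, h2⟩ := h
  exact ⟨by simpa using h2, by simpa using h1⟩

lemma CyclesPath_trans {a b : ℕ} {P R Q : RPair A}
    (h1 : CyclesPath a P R) (h2 : CyclesPath b R Q) : CyclesPath (a + b) P Q := by
  induction a generalizing P with
  | zero => simp only [CyclesPath] at h1; subst h1; simpa using h2
  | succ a ih =>
    obtain ⟨ε, k, R', hk, hit, hrest⟩ := h1
    have : a + 1 + b = (a + b) + 1 := by omega
    rw [this]
    exact ⟨ε, k, R', hk, hit, ih hrest⟩

lemma RmoveIter_snoc {ε : Fin 2} {k : ℕ} {P R Q : RPair A}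
    (h1 : RmoveIter ε k P R) (h2 : Rmove ε R Q) : RmoveIter ε (k+1) P Q := by
  induction k generalizing P with
  | zero => simp only [RmoveIter] at h1; subst h1; exact ⟨Q, h2, rfl⟩
  | succ k ih =>
    obtain ⟨R', hm, hrest⟩ := h1
    exact ⟨R', hm, ih hrest⟩

end RauzyProof
namespace RauzyProof
open RotTest
variable {A : Type*} [Fintype A]

local notation "n" => Fintype.card A

section Stats
variable [NeZero (Fintype.card A)]

def lastI : Fin n := ⟨n - 1, by have := NeZero.pos (Fintype.card A); omega⟩

def hd0 (P : RPair A) : ℕ := ((P.p 1) ((P.p 0).symm 0)).val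
def hd1 (P : RPair A) : ℕ := ((P.p 0) ((P.p 1).symm 0)).val
def lst0 (P : RPair A) : ℕ := ((P.p 1) ((P.p 0).symm lastI)).val
def lst1 (P : RPair A) : ℕ := ((P.p 0) ((P.p 1).symm lastI)).val

@[simp] lemma hd0_swap (P : RPair A) : hd0 (swapP P) = hd1 P := rfl
@[simp] lemma hd1_swap (P : RPair A) : hd1 (swapP P) = hd0 P := rfl
@[simp] lemma lst0_swap (P : RPair A) : lst0 (swapP P) = lst1 P := rfl
@[simp] lemma lst1_swap (P : RPair A) : lst1 (swapP P) = lst0 P := rfl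

lemma hd0_lt (P : RPair A) : hd0 P < n := Fin.isLt _
lemma hd1_lt (P : RPair A) : hd1 P < n := Fin.isLt _
lemma lst0_lt (P : RPair A) : lst0 P < n := Fin.isLt _
lemma lst1_lt (P : RPair A) : lst1 P < n := Fin.isLt _

/-- the pair obtained from `P` by `k` type-0 Rauzy moves, when `t = lst0 P`. -/
noncomputable def mkQ0 (P : RPair A) (t k : ℕ) : RPair A :=
  ⟨![P.p 0, (P.p 1).trans (rot t k)]⟩

@[simp] lemma mkQ0_p0 (P : RPair A) (t k : ℕ) : (mkQ0 P t k).p 0 = P.p 0 := rfl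
@[simp] lemma mkQ0_p1 (P : RPair A) (t k : ℕ) :
    (mkQ0 P t k).p 1 = (P.p 1).trans (rot t k) := rfl

lemma mkQ0_zero (P : RPair A) (t : ℕ) : mkQ0 P t 0 = P := by
  apply RPair.ext'
  funext δ
  rcases fin2_cases δ with h | h <;> subst h <;> simp [rot_zero]

lemma fin2_one_sub_zero : (1 - 0 : Fin 2) = 1 := rfl

lemma lst0_mem (P : RPair A) : P.p 1 ((P.p 0).symm lastI) = ⟨lst0 P, lst0_lt P⟩ :=
  Fin.ext rfl

lemma SM0 (P : RPair A) {t : ℕ} (k : ℕ) (hT : lst0 P = t) :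
    Rmove 0 (mkQ0 P t k) (mkQ0 P t (k+1)) := by
  constructor
  · rfl
  · intro z hz b
    rw [fin2_one_sub_zero]
    simp only [mkQ0_p0, mkQ0_p1, Equiv.trans_apply] at hz ⊢
    have hz' : z = (P.p 0).symm lastI := by
      have : P.p 0 z = lastI := Fin.ext hz
      rw [← this, Equiv.symm_apply_apply]
    subst hz'
    have hvz : (P.p 1 ((P.p 0).symm lastI)).val = t := hT
    have hfix : rot t k (P.p 1 ((P.p 0).symm lastI)) = P.p 1 ((P.p 0).symm lastI) :=
      rot_apply_le k (le_of_eq hvz)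
    simp only [hfix, hvz]
    rw [← rot_succ, rot_one_val]

lemma ITER0 (P : RPair A) {t : ℕ} (hT : lst0 P = t) (k : ℕ) :
    RmoveIter 0 k P (mkQ0 P t k) := by
  induction k with
  | zero => simp only [RmoveIter]; exact (mkQ0_zero P t)
  | succ k ih => exact RmoveIter_snoc ih (SM0 P k hT)

lemma E_hd1 (P : RPair A) (t k : ℕ) : hd1 (mkQ0 P t k) = hd1 P := by
  unfold hd1
  simp only [mkQ0_p0, mkQ0_p1, Equiv.symm_trans_apply]
  rw [rot_symm_le k (by simp)]

lemma E_hd0 (P : RPair A) (t k : ℕ) :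
    hd0 (mkQ0 P t k) = (rot t k (P.p 1 ((P.p 0).symm 0))).val := rfl

lemma E_hd0_fix (P : RPair A) (t k : ℕ) (h : hd0 P ≤ t) : hd0 (mkQ0 P t k) = hd0 P := by
  rw [E_hd0, rot_apply_le k h]; rfl

lemma E_lst0 (P : RPair A) {t : ℕ} (k : ℕ) (hT : lst0 P = t) :
    lst0 (mkQ0 P t k) = lst0 P := by
  unfold lst0
  simp only [mkQ0_p0, mkQ0_p1, Equiv.trans_apply]
  rw [rot_apply_le k (le_of_eq hT)]

lemma E_lst1 (P : RPair A) {t : ℕ} (q : Fin n) (h1 : t < q.val) (h2 : q.val ≤ n - 2) :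
    lst1 (mkQ0 P t (n - 1 - q.val)) = ((P.p 0) ((P.p 1).symm q)).val := by
  unfold lst1
  simp only [mkQ0_p0, mkQ0_p1, Equiv.symm_trans_apply]
  have : (rot t (n - 1 - q.val)).symm lastI = q := rot_symm_last h1 h2
  rw [this]

lemma E_irr (P : RPair A) {t : ℕ} (k : ℕ) (hT : lst0 P = t) (hP : IrreduciblePair P)
    (hA : 2 ≤ n) : IrreduciblePair (mkQ0 P t k) := by
  intro m hm1 hm2 heq
  rw [Set.ext_iff] at heq
  simp only [mkQ0_p0, mkQ0_p1, Equiv.trans_apply, Set.mem_setOf_eq] at heq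
  by_cases hc : m ≤ t + 1
  · apply hP m hm1 hm2
    rw [Set.ext_iff]
    intro a
    simp only [Set.mem_setOf_eq]
    rw [heq a]
    constructor
    · intro h
      by_cases hx : (P.p 1 a).val ≤ t
      · rwa [rot_apply_le k hx] at h
      · push_neg at hx
        rw [rot_val_gt k hx] at h
        omega
    · intro h
      have hx : (P.p 1 a).val ≤ t := by omega
      rwa [rot_apply_le k hx]
  · push_neg at hc
    have h1 := heq ((P.p 0).symm lastI)
    rw [Equiv.apply_symm_apply] at h1
    have hL : (lastI : Fin n).val = n - 1 := rfl
    have hz : (rot t k (P.p 1 ((P.p 0).symm lastI))).val = t := by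
      rw [rot_apply_le k (le_of_eq hT)]
      exact hT
    rw [hL, hz] at h1
    omega

end Stats
end RauzyProof
namespace RauzyProof
open RotTest
variable {A : Type*} [Fintype A]
local notation "n" => Fintype.card A

section Pigeon
variable {N : ℕ}

lemma card_filter_lt (m : ℕ) (hm : m ≤ N) :
    (Finset.univ.filter (fun x : Fin N => x.val < m)).card = m := by
  apply Finset.card_eq_of_bijective (fun i h => (⟨i, lt_of_lt_of_le h hm⟩ : Fin N))
  · intro a ha
    simp only [Finset.mem_filter, Finset.mem_univ, true_and] at ha
    exact ⟨a.val, ha, rfl⟩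
  · intro i h
    simp only [Finset.mem_filter, Finset.mem_univ, true_and]
    exact h
  · intro i j hi hj hij
    simpa using congrArg Fin.val hij

lemma pigeon (σ : Fin N ≃ Fin N) (k : ℕ) (h : ∀ x : Fin N, x.val < k → (σ x).val < k) :
    ∀ x : Fin N, (σ x).val < k ↔ x.val < k := by
  set S := Finset.univ.filter (fun x : Fin N => x.val < k) with hS
  have himg : S.image σ ⊆ S := by
    intro y hy
    simp only [hS, Finset.mem_image, Finset.mem_filter, Finset.mem_univ, true_and] at hy ⊢
    obtain ⟨x, hx, rfl⟩ := hy
    exact h x hx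
  have hcard : S.card ≤ (S.image σ).card := by
    rw [Finset.card_image_of_injective S σ.injective]
  have heq : S.image σ = S := Finset.eq_of_subset_of_card_le himg hcard
  intro x
  constructor
  · intro hx
    have : σ x ∈ S := by simp [hS, hx]
    rw [← heq] at this
    simp only [Finset.mem_image] at this
    obtain ⟨y, hy, hyx⟩ := this
    have : y = x := σ.injective hyx
    subst this
    simpa [hS] using hy
  · exact h x

lemma card_mono_of_maps (σ : Fin N ≃ Fin N) (a b : ℕ) (ha : a ≤ N) (hb : b ≤ N)
    (h : ∀ x : Fin N, x.val < a → (σ x).val < b) : a ≤ b := by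
  have hmaps : ∀ x ∈ Finset.univ.filter (fun x : Fin N => x.val < a),
      σ x ∈ Finset.univ.filter (fun x : Fin N => x.val < b) := by
    intro x hx
    simp only [Finset.mem_filter, Finset.mem_univ, true_and] at hx ⊢
    exact h x hx
  have := Finset.card_le_card_of_injOn σ hmaps (σ.injective.injOn)
  rwa [card_filter_lt a ha, card_filter_lt b hb] at this

end Pigeon

section Sigma
variable [NeZero (Fintype.card A)]

noncomputable def sigma (P : RPair A) : Fin n ≃ Fin n := (P.p 0).symm.trans (P.p 1)

lemma sigma_apply (P : RPair A) (x : Fin n) : sigma P x = P.p 1 ((P.p 0).symm x) := rfl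

lemma sigma_symm_apply (P : RPair A) (x : Fin n) :
    (sigma P).symm x = P.p 0 ((P.p 1).symm x) := by
  simp [sigma]

lemma red (P : RPair A) (hP : IrreduciblePair P) (k : ℕ) (hk0 : 0 < k) (hkn : k < n)
    (h : ∀ x : Fin n, ((sigma P) x).val < k ↔ x.val < k) : False := by
  apply hP k hk0 hkn
  ext a
  simp only [Set.mem_setOf_eq]
  have := h (P.p 0 a)
  rw [sigma_apply, Equiv.symm_apply_apply] at this
  exact this.symm

lemma sigma_zero (P : RPair A) : (sigma P 0).val = hd0 P := rfl
lemma sigma_last (P : RPair A) : (sigma P lastI).val = lst0 P := rfl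
lemma sigma_symm_zero (P : RPair A) : ((sigma P).symm 0).val = hd1 P := by
  rw [sigma_symm_apply]; rfl
lemma sigma_symm_last (P : RPair A) : ((sigma P).symm lastI).val = lst1 P := by
  rw [sigma_symm_apply]; rfl

lemma lastI_val : (lastI : Fin n).val = n - 1 := rfl

variable (hA : 2 ≤ Fintype.card A)
include hA

lemma val0 : ((0 : Fin n)).val = 0 := rfl

lemma F1 (P : RPair A) (hP : IrreduciblePair P) : 0 < hd0 P := by
  by_contra h
  push_neg at h
  have hv0 : ((0 : Fin n)).val = 0 := rfl
  have h0 : sigma P 0 = 0 := Fin.ext (by have := sigma_zero P; omega)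
  apply red P hP 1 one_pos (by omega)
  intro x
  constructor
  · intro hx
    have hx0 : sigma P x = 0 := Fin.ext (by omega)
    have : x = 0 := (sigma P).injective (by rw [hx0, h0])
    subst this
    omega
  · intro hx
    have : x = 0 := Fin.ext (by omega)
    subst this
    rw [h0]
    omega

lemma F2 (P : RPair A) (hP : IrreduciblePair P) : 0 < hd1 P := by
  have := F1 hA (swapP P) (IrreduciblePair_swap hP)
  simpa using this

lemma F3 (P : RPair A) (hP : IrreduciblePair P) : lst0 P ≤ n - 2 := by
  by_contra h
  push_neg at h
  have hlt := lst0_lt P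
  have hv : (sigma P lastI).val = n - 1 := by have := sigma_last P; omega
  have h0 : sigma P lastI = lastI := Fin.ext (by rw [hv, lastI_val])
  apply red P hP (n-1) (by omega) (by omega)
  intro x
  have hxl := x.isLt
  have hsl := (sigma P x).isLt
  constructor
  · intro hx
    by_contra hc
    push_neg at hc
    have hxv : x.val = n - 1 := by omega
    have hxe : x = lastI := Fin.ext (by rw [lastI_val, ← hxv])
    rw [hxe] at hx
    omega
  · intro hx
    by_contra hc
    push_neg at hc
    have hsv : (sigma P x).val = n - 1 := by omega
    have hse : sigma P x = lastI := Fin.ext (by rw [lastI_val, ← hsv])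
    have hxe : x = lastI := (sigma P).injective (by rw [hse, h0])
    rw [hxe, lastI_val] at hx
    omega

lemma F4 (P : RPair A) (hP : IrreduciblePair P) : lst1 P ≤ n - 2 := by
  have := F3 hA (swapP P) (IrreduciblePair_swap hP)
  simpa using this

lemma F5 (P : RPair A) (hP : IrreduciblePair P) (h3 : 3 ≤ n) :
    ¬(hd0 P = 1 ∧ hd1 P = 1) := by
  rintro ⟨hj, hi⟩
  set oneI : Fin n := ⟨1, by omega⟩ with honeI
  have h1 : sigma P 0 = oneI := Fin.ext (by have := sigma_zero P; simp [honeI]; omega)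
  have h2 : sigma P oneI = 0 := by
    have : (sigma P).symm 0 = oneI := Fin.ext (by have := sigma_symm_zero P; simp [honeI]; omega)
    rw [← this, Equiv.apply_symm_apply]
  have hv0 : ((0 : Fin n)).val = 0 := rfl
  have hv1 : (oneI).val = 1 := rfl
  apply red P hP 2 (by omega) (by omega)
  intro x
  constructor
  · intro hx
    rcases (by omega : (sigma P x).val = 0 ∨ (sigma P x).val = 1) with hc | hc
    · have : sigma P x = 0 := Fin.ext (by omega)
      have hxe : x = oneI := (sigma P).injective (by rw [this, h2])
      subst hxe; omega
    · have : sigma P x = oneI := Fin.ext (by omega)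
      have hxe : x = 0 := (sigma P).injective (by rw [this, h1])
      subst hxe; omega
  · intro hx
    rcases (by omega : x.val = 0 ∨ x.val = 1) with hc | hc
    · have hxe : x = 0 := Fin.ext (by omega)
      subst hxe; rw [h1]; omega
    · have hxe : x = oneI := Fin.ext (by omega)
      subst hxe; rw [h2]; omega

lemma F6 (P : RPair A) (hP : IrreduciblePair P) (h3 : 3 ≤ n) :
    ¬(lst0 P = n - 2 ∧ lst1 P = n - 2) := by
  rintro ⟨ht, hu⟩
  set m2 : Fin n := ⟨n - 2, by omega⟩ with hm2
  have h1 : sigma P lastI = m2 := Fin.ext (by have := sigma_last P; simp [hm2]; omega)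
  have h2 : sigma P m2 = lastI := by
    have : (sigma P).symm lastI = m2 := Fin.ext (by have := sigma_symm_last P; simp [hm2]; omega)
    rw [← this, Equiv.apply_symm_apply]
  have hvL : (lastI : Fin n).val = n - 1 := rfl
  have hvm : (m2 : Fin n).val = n - 2 := rfl
  apply red P hP (n-2) (by omega) (by omega)
  intro x
  have hxl := x.isLt
  have hsl := (sigma P x).isLt
  constructor
  · intro hx
    by_contra hc
    rcases (by omega : x.val = n - 2 ∨ x.val = n - 1) with hc2 | hc2
    · have hxe : x = m2 := Fin.ext (by omega)
      subst hxe; rw [h2] at hx; omega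
    · have hxe : x = lastI := Fin.ext (by omega)
      subst hxe; rw [h1] at hx; omega
  · intro hx
    by_contra hc
    rcases (by omega : (sigma P x).val = n - 2 ∨ (sigma P x).val = n - 1) with hc2 | hc2
    · have : sigma P x = m2 := Fin.ext (by omega)
      have hxe : x = lastI := (sigma P).injective (by rw [this, h1])
      subst hxe; omega
    · have : sigma P x = lastI := Fin.ext (by omega)
      have hxe : x = m2 := (sigma P).injective (by rw [this, h2])
      subst hxe; omega

lemma hd0_ne_lst0 (P : RPair A) : hd0 P ≠ lst0 P := by
  intro h
  have h1 : sigma P 0 = sigma P lastI :=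
    Fin.ext (by have := sigma_zero P; have := sigma_last P; omega)
  have := (sigma P).injective h1
  have : ((0:Fin n)).val = (lastI : Fin n).val := congrArg Fin.val this
  rw [val0 hA, lastI_val] at this
  omega

lemma hd1_ne_lst1 (P : RPair A) : hd1 P ≠ lst1 P := by
  have := hd0_ne_lst0 hA (swapP P)
  simpa using this

lemma pos_inj0 (P : RPair A) {q r : Fin n}
    (h : ((P.p 1) ((P.p 0).symm q)).val = ((P.p 1) ((P.p 0).symm r)).val) : q = r := by
  have h1 : (P.p 1) ((P.p 0).symm q) = (P.p 1) ((P.p 0).symm r) := Fin.ext h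
  have := (P.p 0).symm.injective ((P.p 1).injective h1)
  exact this

lemma claimQ (P : RPair A) (hP : IrreduciblePair P)
    (ht2 : 2 ≤ lst0 P) (hu2 : 2 ≤ lst1 P) :
    (∃ q : Fin n, lst1 P < q.val ∧ q.val ≤ n - 2 ∧
        ((P.p 1) ((P.p 0).symm q)).val + 2 ≤ lst0 P) ∨
    (∃ v : Fin n, lst0 P < v.val ∧ v.val ≤ n - 2 ∧
        ((P.p 0) ((P.p 1).symm v)).val + 2 ≤ lst1 P) := by
  have hts := F3 hA P hP
  have hus := F4 hA P hP
  by_contra hcon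
  push_neg at hcon
  obtain ⟨N1, N2⟩ := hcon
  set t := lst0 P with hT
  set u := lst1 P with hU
  set σ := sigma P with hsig
  have hσl : σ lastI = ⟨t, lst0_lt P⟩ := Fin.ext (sigma_last P)
  have hσsl : σ.symm lastI = ⟨u, lst1_lt P⟩ := Fin.ext (sigma_symm_last P)
  have N1' : ∀ q : Fin n, u < q.val → q.val ≤ n - 2 → t < (σ q).val + 2 := by
    intro q h1 h2
    have := N1 q h1 h2
    rw [hsig, sigma_apply]
    omega
  have N2' : ∀ v : Fin n, t < v.val → v.val ≤ n - 2 → u < (σ.symm v).val + 2 := by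
    intro v h1 h2
    have := N2 v h1 h2
    rw [hsig, sigma_symm_apply]
    omega
  -- (A): x.val + 1 < u → σ x < t
  have Afact : ∀ x : Fin n, x.val + 1 < u → (σ x).val < t := by
    intro x hx
    by_contra hc
    push_neg at hc
    have hσx := (σ x).isLt
    rcases (by omega : (σ x).val = n - 1 ∨ (σ x).val = t ∨
        (t < (σ x).val ∧ (σ x).val ≤ n - 2)) with hc2 | hc2 | ⟨hc2, hc3⟩
    · have : σ x = lastI := Fin.ext (by rw [lastI_val]; omega)
      have hxe : x = σ.symm lastI := by rw [← this, Equiv.symm_apply_apply]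
      rw [hσsl] at hxe
      have : x.val = u := congrArg Fin.val hxe
      omega
    · have : σ x = ⟨t, lst0_lt P⟩ := Fin.ext hc2
      have hxe : x = lastI := σ.injective (by rw [this, hσl])
      have : x.val = n - 1 := by rw [hxe]; rfl
      omega
    · have := N2' (σ x) hc2 hc3
      rw [Equiv.symm_apply_apply] at this
      omega
  -- (B): y.val + 1 < t → σ.symm y < u
  have Bfact : ∀ y : Fin n, y.val + 1 < t → (σ.symm y).val < u := by
    intro y hy
    by_contra hc
    push_neg at hc
    have hσy := (σ.symm y).isLt
    rcases (by omega : (σ.symm y).val = n - 1 ∨ (σ.symm y).val = u ∨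
        (u < (σ.symm y).val ∧ (σ.symm y).val ≤ n - 2)) with hc2 | hc2 | ⟨hc2, hc3⟩
    · have : σ.symm y = lastI := Fin.ext (by rw [lastI_val]; omega)
      have hye : y = σ lastI := by rw [← this, Equiv.apply_symm_apply]
      rw [hσl] at hye
      have : y.val = t := congrArg Fin.val hye
      omega
    · have : σ.symm y = ⟨u, lst1_lt P⟩ := Fin.ext hc2
      have hye : y = lastI := σ.symm.injective (by rw [this, hσsl])
      have : y.val = n - 1 := by rw [hye]; rfl
      omega
    · have := N1' (σ.symm y) hc2 hc3
      rw [Equiv.apply_symm_apply] at this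
      omega
  -- cardinality comparisons
  have hut : u - 1 ≤ t :=
    card_mono_of_maps σ (u-1) t (by omega) (by omega)
      (fun x hx => Afact x (by omega))
  have htu : t - 1 ≤ u :=
    card_mono_of_maps σ.symm (t-1) u (by omega) (by omega)
      (fun y hy => Bfact y (by omega))
  rcases (by omega : t = u - 1 ∨ t = u ∨ t = u + 1) with hc | hc | hc
  · -- t = u - 1 : σ maps Iio t into Iio t
    have hpig := pigeon σ t (fun x hx => Afact x (by omega))
    exact red P hP t (by omega) (by omega) hpig
  · -- t = u
    by_cases hsp : (σ ⟨u - 1, by omega⟩).val < u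
    · have hpig := pigeon σ u (by
        intro x hx
        rcases (by omega : x.val + 1 < u ∨ x.val = u - 1) with hx2 | hx2
        · have := Afact x hx2; omega
        · have : x = ⟨u - 1, by omega⟩ := Fin.ext hx2
          rw [this]; exact hsp)
      exact red P hP u (by omega) (by omega) hpig
    · push_neg at hsp
      have hpig := pigeon σ.symm (u - 1) (by
        intro y hy
        have h1 : (σ.symm y).val < u := Bfact y (by omega)
        have h2 : σ.symm y ≠ ⟨u - 1, by omega⟩ := by
          intro he
          have : y = σ ⟨u - 1, by omega⟩ := by rw [← he, Equiv.apply_symm_apply]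
          have : y.val = (σ ⟨u - 1, by omega⟩).val := congrArg Fin.val this
          omega
        have h3 : (σ.symm y).val ≠ u - 1 := fun hv => h2 (Fin.ext hv)
        omega)
      apply red P hP (u - 1) (by omega) (by omega)
      intro x
      have := hpig (σ x)
      rw [Equiv.symm_apply_apply] at this
      exact this.symm
  · -- t = u + 1 : σ.symm maps Iio u into Iio u
    have hpig := pigeon σ.symm u (fun y hy => Bfact y (by omega))
    apply red P hP u (by omega) (by omega)
    intro x
    have := hpig (σ x)
    rw [Equiv.symm_apply_apply] at this
    exact this.symm

end Sigma
end RauzyProof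
namespace RauzyProof
open RotTest
variable {A : Type*} [Fintype A]
local notation "n" => Fintype.card A

section Main
variable [NeZero (Fintype.card A)]

/-- reachability of a standard pair within at most `b` cycles -/
def Reach (b : ℕ) (P : RPair A) : Prop :=
  ∃ m ≤ b, ∃ Q : RPair A, StandardPair Q ∧ CyclesPath m P Q

lemma Reach_mono {b b' : ℕ} {P : RPair A} (h : b ≤ b') (hR : Reach b P) : Reach b' P := by
  obtain ⟨m, hm, Q, hQ, hC⟩ := hR
  exact ⟨m, le_trans hm h, Q, hQ, hC⟩

lemma Reach_swap {b : ℕ} {P : RPair A} (hR : Reach b (swapP P)) : Reach b P := by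
  obtain ⟨m, hm, Q, hQ, hC⟩ := hR
  refine ⟨m, hm, swapP Q, StandardPair_swap hQ, ?_⟩
  have := CyclesPath_swap hC
  rwa [swapP_swapP] at this

lemma Reach_step {b : ℕ} {P R : RPair A} (h1 : CyclesPath 1 P R) (h2 : Reach b R) :
    Reach (b + 1) P := by
  obtain ⟨m, hm, Q, hQ, hC⟩ := h2
  exact ⟨1 + m, by omega, Q, hQ, CyclesPath_trans h1 hC⟩

lemma cycles_one {P R : RPair A} (ε : Fin 2) (k : ℕ) (hk : 0 < k)
    (h : RmoveIter ε k P R) : CyclesPath 1 P R :=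
  ⟨ε, k, R, hk, h, rfl⟩

variable (hA : 2 ≤ Fintype.card A)
include hA

lemma std_of (P : RPair A) (h0 : hd0 P = n - 1) (h1 : hd1 P = n - 1) : StandardPair P := by
  constructor
  · intro a ha
    have : P.p 0 a = 0 := Fin.ext (by rw [val0 hA]; exact ha)
    have hae : a = (P.p 0).symm 0 := by rw [← this, Equiv.symm_apply_apply]
    rw [hae]
    exact h0
  · intro a ha
    have : P.p 1 a = 0 := Fin.ext (by rw [val0 hA]; exact ha)
    have hae : a = (P.p 1).symm 0 := by rw [← this, Equiv.symm_apply_apply]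
    rw [hae]
    exact h1

lemma case2 (P : RPair A) (hP : IrreduciblePair P) (hj : hd0 P = n - 1) : Reach 1 P := by
  by_cases hi : hd1 P = n - 1
  · exact ⟨0, by omega, P, std_of hA P hj hi, rfl⟩
  · have hi1 := F2 hA P hP
    have hi2 : hd1 P ≤ n - 2 := by have := hd1_lt P; omega
    -- lst1 P = 0
    have e1 : P.p 1 ((P.p 0).symm 0) = lastI := Fin.ext (by rw [lastI_val]; exact hj)
    have e2 : (P.p 1).symm lastI = (P.p 0).symm 0 := by
      rw [← e1, Equiv.symm_apply_apply]
    have hu0 : lst1 P = 0 := by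
      unfold lst1
      rw [e2, Equiv.apply_symm_apply]
      rfl
    have hTX : lst0 (swapP P) = 0 := by rw [lst0_swap]; exact hu0
    have hk : 0 < n - 1 - hd1 P := by omega
    have iter := ITER0 (swapP P) hTX (n - 1 - hd1 P)
    have harg : (swapP P).p 1 (((swapP P).p 0).symm 0) = ⟨hd1 P, hd1_lt P⟩ := Fin.ext rfl
    have h0Y : hd0 (mkQ0 (swapP P) 0 (n - 1 - hd1 P)) = n - 1 := by
      rw [E_hd0, harg]
      exact rot_send (t := 0) (q := ⟨hd1 P, hd1_lt P⟩) hi1 hi2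
    have h1Y : hd1 (mkQ0 (swapP P) 0 (n - 1 - hd1 P)) = n - 1 := by
      rw [E_hd1, hd1_swap]
      exact hj
    have std := std_of hA _ h0Y h1Y
    refine ⟨1, le_refl 1, swapP (mkQ0 (swapP P) 0 (n - 1 - hd1 P)),
      StandardPair_swap std, cycles_one (1 - 0) _ hk ?_⟩
    have := RmoveIter_swap iter
    rwa [swapP_swapP] at this

lemma case4 (P : RPair A) (hP : IrreduciblePair P) (ht : lst0 P < hd0 P)
    (hj2 : hd0 P ≤ n - 2) : Reach 2 P := by
  have hk : 0 < n - 1 - hd0 P := by omega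
  have iter := ITER0 P (rfl : lst0 P = lst0 P) (n - 1 - hd0 P)
  have harg : P.p 1 ((P.p 0).symm 0) = ⟨hd0 P, hd0_lt P⟩ := Fin.ext rfl
  have h0Q : hd0 (mkQ0 P (lst0 P) (n - 1 - hd0 P)) = n - 1 := by
    rw [E_hd0, harg]
    exact rot_send (t := lst0 P) (q := ⟨hd0 P, hd0_lt P⟩) ht hj2
  have irrQ := E_irr P (n - 1 - hd0 P) rfl hP hA
  have h2 := case2 hA _ irrQ h0Q
  have := Reach_step (cycles_one 0 _ hk iter) h2
  exact this

lemma dbad : ∀ s : ℕ, ∀ P : RPair A, IrreduciblePair P → hd0 P < lst0 P →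
    hd1 P < lst1 P → lst0 P + lst1 P ≤ s →
    Reach ((s - hd0 P - hd1 P) / 2 + 2) P := by
  intro s
  induction s using Nat.strong_induction_on with
  | _ s ih =>
  intro P hP hjt hiu hs
  have hj1 := F1 hA P hP
  have hi1 := F2 hA P hP
  have ht3 := F3 hA P hP
  have hu3 := F4 hA P hP
  rcases claimQ hA P hP (by omega) (by omega) with ⟨q, hq1, hq2, hq3⟩ | ⟨v, hv1, hv2, hv3⟩
  · -- type-1 cycle on P, i.e. type-0 cycle on the swap, lowering lst0
    have hTX : lst0 (swapP P) = lst1 P := rfl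
    have hk : 0 < n - 1 - q.val := by omega
    have iter0 := ITER0 (swapP P) hTX (n - 1 - q.val)
    set Y := mkQ0 (swapP P) (lst1 P) (n - 1 - q.val) with hY
    have cyc : CyclesPath 1 P (swapP Y) := by
      apply cycles_one (1 - 0) _ hk
      have := RmoveIter_swap iter0
      rwa [swapP_swapP] at this
    have irrY := E_irr (swapP P) (n - 1 - q.val) hTX (IrreduciblePair_swap hP) hA
    have irrQ' := IrreduciblePair_swap irrY
    have e_hd0 : hd0 (swapP Y) = hd0 P := by
      rw [hd0_swap, hY, E_hd1, hd1_swap]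
    have e_hd1 : hd1 (swapP Y) = hd1 P := by
      rw [hd1_swap, hY, E_hd0_fix _ _ _ (by rw [hd0_swap]; omega), hd0_swap]
    have e_lst1 : lst1 (swapP Y) = lst1 P := by
      rw [lst1_swap, hY, E_lst0 _ _ hTX, lst0_swap]
    have e_lst0 : lst0 (swapP Y) = ((P.p 1) ((P.p 0).symm q)).val := by
      rw [lst0_swap, hY, E_lst1 (swapP P) q hq1 hq2, swapP_p0, swapP_p1]
    have hne : ((P.p 1) ((P.p 0).symm q)).val ≠ hd0 P := by
      intro he
      have : q = 0 := pos_inj0 hA P he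
      have : q.val = 0 := by rw [this]; exact val0 hA
      omega
    rcases lt_or_gt_of_ne hne with hlt | hgt
    · -- good: now lst0 < hd0, finish in 2 more cycles
      have h4 := case4 hA (swapP Y) irrQ' (by omega) (by omega)
      have := Reach_step cyc h4
      exact Reach_mono (by omega) this
    · -- still doubly bad; recurse
      have hrec := ih (s - 2) (by omega) (swapP Y) irrQ'
        (by omega) (by omega) (by omega)
      rw [e_hd0, e_hd1] at hrec
      have := Reach_step cyc hrec
      exact Reach_mono (by omega) this
  · -- type-0 cycle on P, lowering lst1
    have hk : 0 < n - 1 - v.val := by omega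
    have iter0 := ITER0 P (rfl : lst0 P = lst0 P) (n - 1 - v.val)
    set Y := mkQ0 P (lst0 P) (n - 1 - v.val) with hY
    have cyc : CyclesPath 1 P Y := cycles_one 0 _ hk iter0
    have irrY := E_irr P (n - 1 - v.val) rfl hP hA
    have e_hd0 : hd0 Y = hd0 P := by
      rw [hY, E_hd0_fix _ _ _ (by omega)]
    have e_hd1 : hd1 Y = hd1 P := by
      rw [hY, E_hd1]
    have e_lst0 : lst0 Y = lst0 P := by
      rw [hY, E_lst0 _ _ rfl]
    have e_lst1 : lst1 Y = ((P.p 0) ((P.p 1).symm v)).val := by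
      rw [hY, E_lst1 P v hv1 hv2]
    have hne : ((P.p 0) ((P.p 1).symm v)).val ≠ hd1 P := by
      intro he
      have hsw : ((swapP P).p 1 (((swapP P).p 0).symm v)).val
          = ((swapP P).p 1 (((swapP P).p 0).symm 0)).val := by
        rw [swapP_p0, swapP_p1]; exact he
      have : v = 0 := pos_inj0 hA (swapP P) hsw
      have : v.val = 0 := by rw [this]; exact val0 hA
      omega
    rcases lt_or_gt_of_ne hne with hlt | hgt
    · have h4 := case4 hA (swapP Y) (IrreduciblePair_swap irrY)
        (by rw [lst0_swap, hd0_swap]; omega) (by rw [hd0_swap]; omega)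
      have h4' := Reach_swap h4
      have := Reach_step cyc h4'
      exact Reach_mono (by omega) this
    · have hrec := ih (s - 2) (by omega) Y irrY
        (by omega) (by omega) (by omega)
      rw [e_hd0, e_hd1] at hrec
      have := Reach_step cyc hrec
      exact Reach_mono (by omega) this

end Main
end RauzyProof
open RauzyProof RotTest in
/-- Any irreducible pair is connected to a standard pair by a Rauzy path of at
most `#A - 2` monotone cycles. -/
theorem dist_to_standard_le
    {A : Type*} [Fintype A] (hA : 2 ≤ Fintype.card A)
    (P : RPair A) (hP : IrreduciblePair P) :
    ∃ m : ℕ, m ≤ Fintype.card A - 2 ∧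
      ∃ Q : RPair A, StandardPair Q ∧ CyclesPath m P Q := by
  haveI : NeZero (Fintype.card A) := ⟨by omega⟩
  have hreach : ∃ b, b ≤ Fintype.card A - 2 ∧ Reach b P := by
    by_cases hj : hd0 P = Fintype.card A - 1
    · by_cases hi : hd1 P = Fintype.card A - 1
      · exact ⟨0, by omega, 0, le_refl 0, P, std_of hA P hj hi, rfl⟩
      · have hi1 := F2 hA P hP
        have hi2 : hd1 P ≤ Fintype.card A - 2 := by have := hd1_lt P; omega
        exact ⟨1, by omega, case2 hA P hP hj⟩
    · have hj1 := F1 hA P hP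
      have hj2 : hd0 P ≤ Fintype.card A - 2 := by have := hd0_lt P; omega
      by_cases hi : hd1 P = Fintype.card A - 1
      · refine ⟨1, by omega, Reach_swap (case2 hA (swapP P) (IrreduciblePair_swap hP) ?_)⟩
        rw [hd0_swap]; exact hi
      · have hi1 := F2 hA P hP
        have hi2 : hd1 P ≤ Fintype.card A - 2 := by have := hd1_lt P; omega
        have h5 := F5 hA P hP (by omega)
        have hji : 3 ≤ hd0 P + hd1 P := by omega
        by_cases ht : lst0 P < hd0 P
        · exact ⟨2, by omega, case4 hA P hP ht hj2⟩
        · by_cases hu : lst1 P < hd1 P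
          · refine ⟨2, by omega, Reach_swap (case4 hA (swapP P) (IrreduciblePair_swap hP) ?_ ?_)⟩
            · rw [lst0_swap, hd0_swap]; exact hu
            · rw [hd0_swap]; exact hi2
          · have htj : hd0 P < lst0 P :=
              lt_of_le_of_ne (by omega) (hd0_ne_lst0 hA P)
            have hui : hd1 P < lst1 P :=
              lt_of_le_of_ne (by omega) (hd1_ne_lst1 hA P)
            have h6 := F6 hA P hP (by omega)
            have ht3 := F3 hA P hP
            have hu3 := F4 hA P hP
            have hd := dbad hA (lst0 P + lst1 P) P hP htj hui (le_refl _)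
            exact ⟨_, by omega, hd⟩
  obtain ⟨b, hb, m, hm, Q, hQ, hC⟩ := hreach
  exact ⟨m, by omega, Q, hQ, hC⟩
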